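/- The crossed product multiplication on X = A ⊗ A ⊗ H, defined by (a₁ ⊗ a₁′ ⊗ b¹)(a₂ ⊗ a₂′ ⊗ b²) = Σ a₁(b¹₍₁₎a₂) ⊗ (b¹₍₃₎a₂′)a₁′ ⊗ b¹₍₂₎b², is associative. -/

import Mathlib

open TensorProduct

noncomputable section ModuleAlgebraDeligne

universe u

variable (K A H : Type u)

/-- An `H`-module-algebra structure on `A`: an `H`-action by `K`-linear maps making `A`
an `H`-module, such that multiplication and unit of `A` are `H`-linear
(the Sweedler sum `∑ (b₍₁₎a₁)(b₍₂₎a₂)` is expressed via `Coalgebra.comul`). -/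
structure ModAlg [Field K] [Ring A] [Algebra K A] [Ring H] [Bialgebra K H] where
  act : H →ₗ[K] A →ₗ[K] A
  act_one : ∀ a : A, act 1 a = a
  act_mul : ∀ (b c : H) (a : A), act (b * c) a = act b (act c a)
  act_unit : ∀ b : H, act b (1 : A) = (Coalgebra.counit (R := K) b) • (1 : A)
  act_alg : ∀ (b : H) (a₁ a₂ : A),
    act b (a₁ * a₂) =
      LinearMap.mul' K A
        ((TensorProduct.homTensorHomMap (RingHom.id K) A A A A)
          (TensorProduct.map act act (Coalgebra.comul (R := K) b)) (a₁ ⊗ₜ[K] a₂))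

variable [Field K] [Ring A] [Algebra K A] [Ring H] [Bialgebra K H]

/-- The defining formula of the crossed product multiplication on `X = A ⊗ A ⊗ H`:
`(a₁ ⊗ a₁' ⊗ b¹)(a₂ ⊗ a₂' ⊗ b²) = ∑ a₁(b¹₍₁₎a₂) ⊗ (b¹₍₃₎a₂')a₁' ⊗ b¹₍₂₎b²`. -/
def XMulFormula (act : H →ₗ[K] A →ₗ[K] A)
    (mul : (A ⊗[K] (A ⊗[K] H)) →ₗ[K] (A ⊗[K] (A ⊗[K] H)) →ₗ[K] (A ⊗[K] (A ⊗[K] H))) :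
    Prop :=
  ∀ (a₁ a₁' : A) (b₁ : H) (a₂ a₂' : A) (b₂ : H),
    mul (a₁ ⊗ₜ[K] (a₁' ⊗ₜ[K] b₁)) (a₂ ⊗ₜ[K] (a₂' ⊗ₜ[K] b₂)) =
      TensorProduct.map
        (LinearMap.mulLeft K a₁ ∘ₗ act.flip a₂)
        ((TensorProduct.map (LinearMap.mulRight K a₁' ∘ₗ act.flip a₂')
            (LinearMap.mulRight K b₂)) ∘ₗ (TensorProduct.comm K H H).toLinearMap)
        ((LinearMap.lTensor H (Coalgebra.comul (R := K)) ∘ₗ Coalgebra.comul (R := K)) b₁)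

/-- Iterated tensor power `A^{⊗(n+1)}` (so `Tpow K A n` has `n+1` tensor factors),
bundled with its module structure. -/
def TpowAux : ℕ → Σ' (T : Type u) (_ : AddCommGroup T), Module K T
  | 0 => ⟨A, inferInstance, inferInstance⟩
  | n + 1 =>
    letI T := TpowAux n
    letI : AddCommGroup T.1 := T.2.1
    letI : Module K T.1 := T.2.2
    ⟨A ⊗[K] T.1, inferInstance, inferInstance⟩

/-- `Tpow K A n = A^{⊗(n+1)}`. -/
def Tpow (n : ℕ) : Type u := (TpowAux K A n).1

instance instTpowAuxACG (n : ℕ) : AddCommGroup (TpowAux K A n).1 := (TpowAux K A n).2.1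
instance instTpowAuxMod (n : ℕ) : Module K (TpowAux K A n).1 := (TpowAux K A n).2.2
instance (n : ℕ) : AddCommGroup (Tpow K A n) := (TpowAux K A n).2.1
instance (n : ℕ) : Module K (Tpow K A n) := (TpowAux K A n).2.2

/-- Cast between equal tensor powers (identity when `m = n`, junk `0` otherwise). -/
def tmap (m n : ℕ) : Tpow K A m →ₗ[K] Tpow K A n :=
  if h : m = n then by subst h; exact LinearMap.id else 0

/-- Left multiplication by an element of `A` on the first tensor factor. -/
def lmulL : ∀ n : ℕ, A →ₗ[K] Tpow K A n →ₗ[K] Tpow K A n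
  | 0 => LinearMap.mul K A
  | n + 1 =>
    (LinearMap.rTensorHom (R := K) (M := Tpow K A n) (N := A) (P := A)) ∘ₗ
      LinearMap.mul K A

/-- Right multiplication by an element of `A` on the last tensor factor. -/
def rmulL : ∀ n : ℕ, A →ₗ[K] Tpow K A n →ₗ[K] Tpow K A n
  | 0 => (LinearMap.mul K A).flip
  | n + 1 =>
    (LinearMap.lTensorHom (R := K) (M := A) (N := Tpow K A n) (P := Tpow K A n)) ∘ₗ
      rmulL n

/-- Componentwise action of `H^{⊗(n+1)}` on `A^{⊗(n+1)}` induced by an action of `H` on `A`. -/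
def tact (act : H →ₗ[K] A →ₗ[K] A) :
    ∀ n : ℕ, Tpow K H n →ₗ[K] Tpow K A n →ₗ[K] Tpow K A n
  | 0 => act
  | n + 1 =>
    (TensorProduct.homTensorHomMap (RingHom.id K) A (Tpow K A n) A (Tpow K A n)) ∘ₗ
      TensorProduct.map act (tact act n)

/-- Iterated comultiplication `Δⁿ : H → H^{⊗(n+1)}`. -/
def itComul : ∀ n : ℕ, H →ₗ[K] Tpow K H n
  | 0 => LinearMap.id
  | n + 1 => LinearMap.lTensor H (itComul n) ∘ₗ Coalgebra.comul (R := K)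

/-- The action of the pure tensor `a ⊗ a' ⊗ b ∈ X = A ⊗ A ⊗ H` on `A^{⊗(n+1)}`:
`(a ⊗ a' ⊗ b)(a₀ ⊗ ⋯ ⊗ aₙ) = ∑ a b₍₁₎a₀ ⊗ b₍₂₎a₁ ⊗ ⋯ ⊗ b₍ₙ₊₁₎aₙ a'`. -/
def xActP (act : H →ₗ[K] A →ₗ[K] A) (n : ℕ) (a a' : A) (b : H) :
    Tpow K A n →ₗ[K] Tpow K A n :=
  lmulL K A n a ∘ₗ rmulL K A n a' ∘ₗ tact K A H act n (itComul K H n b)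

/-- `X`-linearity (equivariance with respect to all pure tensors of `X = A ⊗ A ⊗ H`)
of a degree-`m` Hopf-Hochschild cochain `g : A^{⊗(m+2)} → A`. -/
def IsXLinear (act : H →ₗ[K] A →ₗ[K] A) (m : ℕ) (g : Tpow K A (m + 1) →ₗ[K] A) : Prop :=
  ∀ (a a' : A) (b : H) (t : Tpow K A (m + 1)),
    g (xActP K A H act (m + 1) a a' b t) = a * act b (g t) * a'

/-- Append an element of `A` as a new last tensor factor. -/
def appendA : ∀ n : ℕ, A →ₗ[K] Tpow K A n →ₗ[K] Tpow K A (n + 1)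
  | 0 => (TensorProduct.mk K A A).flip
  | n + 1 =>
    (LinearMap.lTensorHom (R := K) (M := A) (N := Tpow K A n) (P := Tpow K A (n + 1))) ∘ₗ
      appendA n

/-- The "inner part" `g(1 ⊗ - ⊗ 1) : A^{⊗n} → A` of a cochain `g : A^{⊗(n+2)} → A`. -/
def innerC {n : ℕ} (g : Tpow K A (n + 2) →ₗ[K] A) : Tpow K A n →ₗ[K] A :=
  g ∘ₗ TensorProduct.mk K A (Tpow K A (n + 1)) 1 ∘ₗ appendA K A n 1

/-- Consume the first `n+1` tensor factors of `A^{⊗(S+n+2)}` using a map `A^{⊗(n+1)} → A`,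
leaving the remaining `A^{⊗(S+1)}`. -/
def consume : ∀ n S : ℕ,
    (Tpow K A n →ₗ[K] A) →ₗ[K] (Tpow K A (S + n + 1) →ₗ[K] A ⊗[K] Tpow K A S)
  | 0, S => LinearMap.rTensorHom (R := K) (M := Tpow K A S) (N := A) (P := A)
  | n + 1, S =>
    (TensorProduct.lift.equiv (RingHom.id K) A (Tpow K A (S + n + 1)) (A ⊗[K] Tpow K A S)).toLinearMap ∘ₗ
      (LinearMap.llcomp K A (Tpow K A n →ₗ[K] A)
          (Tpow K A (S + n + 1) →ₗ[K] A ⊗[K] Tpow K A S) (consume n S)) ∘ₗ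
        TensorProduct.lcurry (RingHom.id K) A (Tpow K A n) A

/-- An operadic "entry": a Hopf-Hochschild cochain of degree `m`,
i.e. a linear map `A^{⊗(m+2)} → A`. -/
def Entry : Type u := Σ' m : ℕ, Tpow K A (m + 1) →ₗ[K] A

/-- Total degree of a list of entries. -/
def sumA : List (Entry K A) → ℕ
  | [] => 0
  | e :: l => sumA l + e.1

/-- The block-substitution map underlying the operad structure maps `γ`. -/
def gammaAux : ∀ l : List (Entry K A), Tpow K A (sumA K A l) →ₗ[K] Tpow K A l.length
  | [] => LinearMap.id
  | ⟨0, _⟩ :: _ => 0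
  | ⟨n + 1, g⟩ :: l =>
    LinearMap.lTensor A (gammaAux l) ∘ₗ consume K A n (sumA K A l) (innerC K A g)

/-- The operad structure map `γ(f; g₁, …, g_k)` of the Hopf-Hochschild cochain operad. -/
def gamma (l : List (Entry K A)) (f : Tpow K A (l.length + 1) →ₗ[K] A) :
    Tpow K A (sumA K A l + 1) →ₗ[K] A :=
  f ∘ₗ LinearMap.lTensor A (gammaAux K A l)

/-- `γ(f; g₁, …, g_k)` with degree bookkeeping by casts: `f` has degree `k`,
the result is regarded as a map on `Tpow K A M = A^{⊗(M+1)}`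
(the casts are identities in every intended use, where `l.length = k`
and `M = sumA l + 1`). -/
def gammaD (k : ℕ) (f : Tpow K A (k + 1) →ₗ[K] A) (l : List (Entry K A)) (M : ℕ) :
    Tpow K A M →ₗ[K] A :=
  gamma K A l (f ∘ₗ tmap K A (l.length + 1) (k + 1)) ∘ₗ tmap K A M (sumA K A l + 1)

/-- The identity cochain `Id ∈ C(1)`, `a₀ ⊗ a₁ ⊗ a₂ ↦ a₀a₁a₂`. -/
def idC : Tpow K A 2 →ₗ[K] A :=
  LinearMap.mul' K A ∘ₗ LinearMap.lTensor A (LinearMap.mul' K A)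

/-- `Id` as an entry. -/
def idE : Entry K A := ⟨1, idC K A⟩

/-- The multiplication cochain `π ∈ C(2)`, `a₀ ⊗ a₁ ⊗ a₂ ⊗ a₃ ↦ a₀a₁a₂a₃`. -/
def piC : Tpow K A 3 →ₗ[K] A :=
  LinearMap.mul' K A ∘ₗ
    LinearMap.lTensor A (LinearMap.mul' K A ∘ₗ LinearMap.lTensor A (LinearMap.mul' K A))

/-- The face map `∂ⱼ : A^{⊗(n+2)} → A^{⊗(n+1)}` of the bar complex. -/
def face : ∀ n j : ℕ, Tpow K A (n + 1) →ₗ[K] Tpow K A n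
  | n, 0 => TensorProduct.lift (lmulL K A n)
  | 0, _ + 1 => TensorProduct.lift (lmulL K A 0)
  | n + 1, j + 1 => LinearMap.lTensor A (face n j)

/-- The bar differential `d_n = ∑_{j=0}^n (−1)ʲ ∂ⱼ : A^{⊗(n+2)} → A^{⊗(n+1)}`. -/
def barDiff (n : ℕ) : Tpow K A (n + 1) →ₗ[K] Tpow K A n :=
  ∑ j ∈ Finset.range (n + 1), (-1 : K) ^ j • face K A n j

end ModuleAlgebraDeligne


namespace CPassocAux

open TensorProduct LinearMap

universe v

variable (K A H : Type v)
variable [Field K] [Ring A] [Algebra K A] [Ring H] [Bialgebra K H]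

noncomputable def dd : H →ₗ[K] H ⊗[K] H := Coalgebra.comul

noncomputable def D2 : H →ₗ[K] H ⊗[K] (H ⊗[K] H) :=
  lTensor H (dd K H) ∘ₗ dd K H

noncomputable def D3 : H →ₗ[K] H ⊗[K] (H ⊗[K] (H ⊗[K] H)) :=
  lTensor H (D2 K H) ∘ₗ dd K H

noncomputable def D4 : H →ₗ[K] H ⊗[K] (H ⊗[K] (H ⊗[K] (H ⊗[K] H))) :=
  lTensor H (D3 K H) ∘ₗ dd K H

lemma lT_dd_eq : lTensor H (dd K H) =
    (Algebra.TensorProduct.map (AlgHom.id K H) (Bialgebra.comulAlgHom K H)).toLinearMap := by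
  apply TensorProduct.ext'
  intro x y
  simp [dd]

lemma D2_mul (x y : H) : D2 K H (x * y) = D2 K H x * D2 K H y := by
  have h : ∀ t : H ⊗[K] H, lTensor H (Coalgebra.comul (R := K)) t =
      (Algebra.TensorProduct.map (AlgHom.id K H) (Bialgebra.comulAlgHom K H)) t := by
    intro t; rw [show (Coalgebra.comul (R := K) (A := H)) = dd K H from rfl, lT_dd_eq]; rfl
  simp only [D2, comp_apply, dd, Bialgebra.comul_mul, h]
  exact map_mul _ _ _

-- coassociativity in our notation
lemma coas : rTensor H (dd K H) ∘ₗ dd K H =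
    (TensorProduct.assoc K H H H).symm.toLinearMap ∘ₗ D2 K H := by
  simp only [D2, dd]
  exact Coalgebra.coassoc_symm.symm


noncomputable def gammaL : H ⊗[K] (H ⊗[K] (H ⊗[K] (H ⊗[K] H))) →ₗ[K]
    H ⊗[K] ((H ⊗[K] (H ⊗[K] H)) ⊗[K] H) :=
  lTensor H ((TensorProduct.assoc K H (H ⊗[K] H) H).symm.toLinearMap ∘ₗ
    lTensor H (TensorProduct.assoc K H H H).symm.toLinearMap)

noncomputable def betaM : (H ⊗[K] H) ⊗[K] (H ⊗[K] (H ⊗[K] H)) →ₗ[K]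
    H ⊗[K] ((H ⊗[K] (H ⊗[K] H)) ⊗[K] H) :=
  gammaL K H ∘ₗ (TensorProduct.assoc K H H (H ⊗[K] (H ⊗[K] H))).toLinearMap

lemma C2 : map (dd K H) (lTensor H (dd K H)) ∘ₗ D2 K H =
    (TensorProduct.assoc K H H (H ⊗[K] (H ⊗[K] H))).symm.toLinearMap ∘ₗ D4 K H := by
  have s1 : map (dd K H) (lTensor H (dd K H)) ∘ₗ lTensor H (dd K H)
      = lTensor (H ⊗[K] H) (D2 K H) ∘ₗ rTensor H (dd K H) := by
    ext x y; simp [D2]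
  have s3 : lTensor (H ⊗[K] H) (D2 K H) ∘ₗ (TensorProduct.assoc K H H H).symm.toLinearMap
      = (TensorProduct.assoc K H H (H ⊗[K] (H ⊗[K] H))).symm.toLinearMap ∘ₗ
        lTensor H (lTensor H (D2 K H)) := by
    ext x y z; simp
  have s4 : lTensor H (lTensor H (D2 K H)) ∘ₗ D2 K H = lTensor H (D3 K H) ∘ₗ dd K H := by
    rw [D2, ← comp_assoc, ← lTensor_comp]; rfl
  calc map (dd K H) (lTensor H (dd K H)) ∘ₗ D2 K H
      = (map (dd K H) (lTensor H (dd K H)) ∘ₗ lTensor H (dd K H)) ∘ₗ dd K H := rfl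
    _ = (lTensor (H ⊗[K] H) (D2 K H) ∘ₗ rTensor H (dd K H)) ∘ₗ dd K H := by rw [s1]
    _ = lTensor (H ⊗[K] H) (D2 K H) ∘ₗ (rTensor H (dd K H) ∘ₗ dd K H) := by rw [comp_assoc]
    _ = (lTensor (H ⊗[K] H) (D2 K H) ∘ₗ (TensorProduct.assoc K H H H).symm.toLinearMap) ∘ₗ D2 K H := by
        rw [coas, ← comp_assoc]
    _ = ((TensorProduct.assoc K H H (H ⊗[K] (H ⊗[K] H))).symm.toLinearMap ∘ₗ
        lTensor H (lTensor H (D2 K H))) ∘ₗ D2 K H := by rw [s3]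
    _ = (TensorProduct.assoc K H H (H ⊗[K] (H ⊗[K] H))).symm.toLinearMap ∘ₗ
        (lTensor H (lTensor H (D2 K H)) ∘ₗ D2 K H) := by rw [comp_assoc]
    _ = (TensorProduct.assoc K H H (H ⊗[K] (H ⊗[K] H))).symm.toLinearMap ∘ₗ D4 K H := by
        rw [s4]; rfl

lemma C1 : lTensor H (rTensor H (D2 K H)) ∘ₗ D2 K H = gammaL K H ∘ₗ D4 K H := by
  have t3 : rTensor H (lTensor H (dd K H)) ∘ₗ (TensorProduct.assoc K H H H).symm.toLinearMap
      = (TensorProduct.assoc K H (H ⊗[K] H) H).symm.toLinearMap ∘ₗ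
        lTensor H (rTensor H (dd K H)) := by
    ext x y z; simp
  have t4 : lTensor H (rTensor H (dd K H)) ∘ₗ D2 K H
      = lTensor H (TensorProduct.assoc K H H H).symm.toLinearMap ∘ₗ D3 K H := by
    calc lTensor H (rTensor H (dd K H)) ∘ₗ D2 K H
        = lTensor H (rTensor H (dd K H) ∘ₗ dd K H) ∘ₗ dd K H := by
          rw [D2, ← comp_assoc, ← lTensor_comp]
      _ = lTensor H ((TensorProduct.assoc K H H H).symm.toLinearMap ∘ₗ D2 K H) ∘ₗ dd K H := by
          rw [coas]
      _ = lTensor H (TensorProduct.assoc K H H H).symm.toLinearMap ∘ₗ D3 K H := by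
          rw [lTensor_comp, comp_assoc]; rfl
  have t5 : rTensor H (D2 K H) ∘ₗ dd K H
      = ((TensorProduct.assoc K H (H ⊗[K] H) H).symm.toLinearMap ∘ₗ
          lTensor H (TensorProduct.assoc K H H H).symm.toLinearMap) ∘ₗ D3 K H := by
    calc rTensor H (D2 K H) ∘ₗ dd K H
        = rTensor H (lTensor H (dd K H)) ∘ₗ (rTensor H (dd K H) ∘ₗ dd K H) := by
          rw [D2, rTensor_comp, comp_assoc]
      _ = (rTensor H (lTensor H (dd K H)) ∘ₗ (TensorProduct.assoc K H H H).symm.toLinearMap)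
            ∘ₗ D2 K H := by rw [coas, ← comp_assoc]
      _ = (TensorProduct.assoc K H (H ⊗[K] H) H).symm.toLinearMap ∘ₗ
            (lTensor H (rTensor H (dd K H)) ∘ₗ D2 K H) := by rw [t3, comp_assoc]
      _ = _ := by rw [t4, ← comp_assoc]
  calc lTensor H (rTensor H (D2 K H)) ∘ₗ D2 K H
      = lTensor H (rTensor H (D2 K H) ∘ₗ dd K H) ∘ₗ dd K H := by
        rw [D2, ← comp_assoc, ← lTensor_comp]
    _ = lTensor H ((TensorProduct.assoc K H (H ⊗[K] H) H).symm.toLinearMap ∘ₗ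
          lTensor H (TensorProduct.assoc K H H H).symm.toLinearMap) ∘ₗ
          (lTensor H (D3 K H) ∘ₗ dd K H) := by
        rw [t5, lTensor_comp, comp_assoc]
    _ = gammaL K H ∘ₗ D4 K H := rfl

lemma hC : lTensor H (rTensor H (D2 K H)) ∘ₗ D2 K H =
    betaM K H ∘ₗ map (dd K H) (lTensor H (dd K H)) ∘ₗ D2 K H := by
  rw [C1, C2, betaM]
  apply LinearMap.ext; intro b
  simp


noncomputable def Fm (ρ : H →ₗ[K] A →ₗ[K] A) (p q : A) : H →ₗ[K] A :=
  LinearMap.mulLeft K p ∘ₗ ρ.flip q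

noncomputable def Gm (ρ : H →ₗ[K] A →ₗ[K] A) (p q : A) (r : H) :
    H ⊗[K] H →ₗ[K] A ⊗[K] H :=
  (map (LinearMap.mulRight K p ∘ₗ ρ.flip q) (LinearMap.mulRight K r)) ∘ₗ
    (TensorProduct.comm K H H).toLinearMap

noncomputable def M2 (ρ : H →ₗ[K] A →ₗ[K] A) (p q p' q' : A) (r : H) :
    H ⊗[K] (H ⊗[K] H) →ₗ[K] A ⊗[K] (A ⊗[K] H) :=
  map (Fm K A H ρ p q) (Gm K A H ρ p' q' r)

noncomputable def c1m (ρ : H →ₗ[K] A →ₗ[K] A) (a₁ a₂ a₃ : A) : H ⊗[K] H →ₗ[K] A :=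
  LinearMap.mul' K A ∘ₗ map (Fm K A H ρ a₁ a₂) (ρ.flip a₃)

noncomputable def c2m (ρ : H →ₗ[K] A →ₗ[K] A) (a₁' a₂' a₃' : A) : H ⊗[K] H →ₗ[K] A :=
  LinearMap.mul' K A ∘ₗ map (ρ.flip a₃') (LinearMap.mulRight K a₁' ∘ₗ ρ.flip a₂')

noncomputable def sigM : H ⊗[K] ((H ⊗[K] (H ⊗[K] H)) ⊗[K] H) →ₗ[K]
    (H ⊗[K] H) ⊗[K] (H ⊗[K] (H ⊗[K] H)) :=
  (TensorProduct.assoc K H H (H ⊗[K] (H ⊗[K] H))).symm.toLinearMap ∘ₗ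
    lTensor H (lTensor H (TensorProduct.assoc K H H H).toLinearMap ∘ₗ
      (TensorProduct.assoc K H (H ⊗[K] H) H).toLinearMap)

noncomputable def ThetaM (ρ : H →ₗ[K] A →ₗ[K] A) (a₁ a₂ a₃ a₁' a₂' a₃' : A) (b₃ : H) :
    H ⊗[K] ((H ⊗[K] (H ⊗[K] H)) ⊗[K] H) →ₗ[K] A ⊗[K] (A ⊗[K] H) :=
  map (c1m K A H ρ a₁ a₂ a₃)
    ((TensorProduct.comm K H A).toLinearMap ∘ₗ
      map (LinearMap.mulRight K b₃) (c2m K A H ρ a₁' a₂' a₃')) ∘ₗ sigM K H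

noncomputable def m1M : ((H ⊗[K] (H ⊗[K] H)) ⊗[K] H) ⊗[K] (H ⊗[K] (H ⊗[K] H)) →ₗ[K]
    (H ⊗[K] (H ⊗[K] H)) ⊗[K] H :=
  rTensor H (LinearMap.mul' K (H ⊗[K] (H ⊗[K] H))) ∘ₗ
    (TensorProduct.assoc K (H ⊗[K] (H ⊗[K] H)) (H ⊗[K] (H ⊗[K] H)) H).symm.toLinearMap ∘ₗ
    lTensor (H ⊗[K] (H ⊗[K] H)) (TensorProduct.comm K H (H ⊗[K] (H ⊗[K] H))).toLinearMap ∘ₗ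
    (TensorProduct.assoc K (H ⊗[K] (H ⊗[K] H)) H (H ⊗[K] (H ⊗[K] H))).toLinearMap

noncomputable def PsiM (ρ : H →ₗ[K] A →ₗ[K] A) (a₁ a₂ a₃ a₁' a₂' a₃' : A) (b₃ : H) :
    (H ⊗[K] ((H ⊗[K] (H ⊗[K] H)) ⊗[K] H)) ⊗[K] (H ⊗[K] (H ⊗[K] H)) →ₗ[K]
      A ⊗[K] (A ⊗[K] H) :=
  ThetaM K A H ρ a₁ a₂ a₃ a₁' a₂' a₃' b₃ ∘ₗ lTensor H (m1M K H) ∘ₗ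
    (TensorProduct.assoc K H ((H ⊗[K] (H ⊗[K] H)) ⊗[K] H) (H ⊗[K] (H ⊗[K] H))).toLinearMap

lemma Psi_tmul (ρ : H →ₗ[K] A →ₗ[K] A) (a₁ a₂ a₃ a₁' a₂' a₃' : A) (b₃ : H)
    (u v₁ v₂ v₃ w c₁ c₂ c₃ : H) :
    PsiM K A H ρ a₁ a₂ a₃ a₁' a₂' a₃' b₃
        ((u ⊗ₜ ((v₁ ⊗ₜ (v₂ ⊗ₜ v₃)) ⊗ₜ w)) ⊗ₜ (c₁ ⊗ₜ (c₂ ⊗ₜ c₃))) =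
      ((a₁ * ρ u a₂) * ρ (v₁ * c₁) a₃) ⊗ₜ
        ((ρ (v₃ * c₃) a₃' * (ρ w a₂' * a₁')) ⊗ₜ ((v₂ * c₂) * b₃)) := by
  simp [PsiM, ThetaM, sigM, m1M, c1m, c2m, Fm, Algebra.TensorProduct.tmul_mul_tmul]


lemma hL' (ρ : H →ₗ[K] A →ₗ[K] A) (a₁ a₂ a₃ a₁' a₂' a₃' : A) (b₃ : H) (u w : H) :
    M2 K A H ρ (a₁ * ρ u a₂) a₃ (ρ w a₂' * a₁') a₃' b₃ ∘ₗ
        LinearMap.mul' K (H ⊗[K] (H ⊗[K] H))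
      = PsiM K A H ρ a₁ a₂ a₃ a₁' a₂' a₃' b₃ ∘ₗ
        rTensor (H ⊗[K] (H ⊗[K] H))
          (TensorProduct.mk K H ((H ⊗[K] (H ⊗[K] H)) ⊗[K] H) u ∘ₗ
            (TensorProduct.mk K (H ⊗[K] (H ⊗[K] H)) H).flip w) := by
  ext v₁ v₂ v₃ c₁ c₂ c₃
  simp [M2, Fm, Gm, Psi_tmul, Algebra.TensorProduct.tmul_mul_tmul, mul_assoc]

lemma hR'' (ρ : H →ₗ[K] A →ₗ[K] A)
    (hρ : ∀ (b c : H) (a : A), ρ (b * c) a = ρ b (ρ c a))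
    (a₁ a₂ a₃ a₁' a₂' a₃' : A) (b₃ : H) (u' v' w' v : H) :
    map (LinearMap.mulLeft K a₁ ∘ₗ (LinearMap.mul' K A ∘ₗ
        ((TensorProduct.homTensorHomMap (RingHom.id K) A A A A ∘ₗ map ρ ρ).flip (a₂ ⊗ₜ[K] ρ u' a₃))))
      ((TensorProduct.mk K A H).flip (v * (v' * b₃)) ∘ₗ LinearMap.mulRight K a₁' ∘ₗ
        (LinearMap.mul' K A ∘ₗ
          ((TensorProduct.homTensorHomMap (RingHom.id K) A A A A ∘ₗ map ρ ρ).flip (ρ w' a₃' ⊗ₜ[K] a₂'))))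
      = PsiM K A H ρ a₁ a₂ a₃ a₁' a₂' a₃' b₃ ∘ₗ
        (TensorProduct.mk K (H ⊗[K] ((H ⊗[K] (H ⊗[K] H)) ⊗[K] H))
            (H ⊗[K] (H ⊗[K] H))).flip (u' ⊗ₜ (v' ⊗ₜ w')) ∘ₗ betaM K H ∘ₗ
        lTensor (H ⊗[K] H) (TensorProduct.mk K H (H ⊗[K] H) v) := by
  ext u₁ u₂ w₁ w₂
  simp [betaM, gammaL, Psi_tmul, mul_assoc, ← hρ]


lemma hR' (ρ : H →ₗ[K] A →ₗ[K] A)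
    (hρ : ∀ (b c : H) (a : A), ρ (b * c) a = ρ b (ρ c a))
    (halg : ∀ (b : H) (x y : A), ρ b (x * y) =
      LinearMap.mul' K A ((TensorProduct.homTensorHomMap (RingHom.id K) A A A A)
        ((TensorProduct.map ρ ρ) (Coalgebra.comul (R := K) b)) (x ⊗ₜ[K] y)))
    (a₁ a₂ a₃ a₁' a₂' a₃' : A) (b₃ : H) (u' v' w' : H) :
    M2 K A H ρ a₁ (a₂ * ρ u' a₃) a₁' (ρ w' a₃' * a₂') (v' * b₃)
      = PsiM K A H ρ a₁ a₂ a₃ a₁' a₂' a₃' b₃ ∘ₗ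
        (TensorProduct.mk K (H ⊗[K] ((H ⊗[K] (H ⊗[K] H)) ⊗[K] H))
            (H ⊗[K] (H ⊗[K] H))).flip (u' ⊗ₜ (v' ⊗ₜ w')) ∘ₗ betaM K H ∘ₗ
        map (dd K H) (lTensor H (dd K H)) := by
  ext u v w
  have h := LinearMap.congr_fun
    (hR'' K A H ρ hρ a₁ a₂ a₃ a₁' a₂' a₃' b₃ u' v' w' v) (dd K H u ⊗ₜ[K] dd K H w)
  simp only [map_tmul, LinearMap.comp_apply, LinearMap.flip_apply, lTensor_tmul,
    TensorProduct.mk_apply, LinearMap.mulLeft_apply, LinearMap.mulRight_apply, dd] at h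
  simp only [TensorProduct.AlgebraTensorModule.curry_apply, TensorProduct.curry_apply,
    LinearMap.coe_restrictScalars, M2, Fm, Gm, map_tmul, LinearMap.comp_apply,
    LinearEquiv.coe_coe, TensorProduct.comm_tmul, LinearMap.mulLeft_apply,
    LinearMap.mulRight_apply, LinearMap.flip_apply, lTensor_tmul, TensorProduct.mk_apply, dd]
  rw [halg u a₂ (ρ u' a₃), halg w (ρ w' a₃') a₂']
  exact h


lemma hLm (ρ : H →ₗ[K] A →ₗ[K] A)
    (mul : (A ⊗[K] (A ⊗[K] H)) →ₗ[K] (A ⊗[K] (A ⊗[K] H)) →ₗ[K] (A ⊗[K] (A ⊗[K] H)))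
    (hm : ∀ (p p' : A) (b : H) (q q' : A) (c : H),
      mul (p ⊗ₜ (p' ⊗ₜ b)) (q ⊗ₜ (q' ⊗ₜ c)) = M2 K A H ρ p q p' q' c (D2 K H b))
    (a₁ a₂ a₃ a₁' a₂' a₃' : A) (b₂ b₃ : H) :
    mul.flip (a₃ ⊗ₜ (a₃' ⊗ₜ b₃)) ∘ₗ M2 K A H ρ a₁ a₂ a₁' a₂' b₂
      = PsiM K A H ρ a₁ a₂ a₃ a₁' a₂' a₃' b₃ ∘ₗ
        (TensorProduct.mk K (H ⊗[K] ((H ⊗[K] (H ⊗[K] H)) ⊗[K] H))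
          (H ⊗[K] (H ⊗[K] H))).flip (D2 K H b₂) ∘ₗ
        lTensor H (rTensor H (D2 K H)) := by
  ext u v w
  simp only [TensorProduct.AlgebraTensorModule.curry_apply, TensorProduct.curry_apply,
    LinearMap.coe_restrictScalars, LinearMap.comp_apply, LinearMap.flip_apply, M2, Fm, Gm,
    map_tmul, LinearEquiv.coe_coe, TensorProduct.comm_tmul, LinearMap.mulLeft_apply,
    LinearMap.mulRight_apply, lTensor_tmul, rTensor_tmul, TensorProduct.mk_apply]
  rw [hm, D2_mul]
  have h := LinearMap.congr_fun
    (hL' K A H ρ a₁ a₂ a₃ a₁' a₂' a₃' b₃ u w) (D2 K H v ⊗ₜ[K] D2 K H b₂)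
  simp only [LinearMap.comp_apply, LinearMap.mul'_apply, rTensor_tmul,
    TensorProduct.mk_apply, LinearMap.flip_apply] at h
  exact h

lemma hRm (ρ : H →ₗ[K] A →ₗ[K] A)
    (mul : (A ⊗[K] (A ⊗[K] H)) →ₗ[K] (A ⊗[K] (A ⊗[K] H)) →ₗ[K] (A ⊗[K] (A ⊗[K] H)))
    (hm : ∀ (p p' : A) (b : H) (q q' : A) (c : H),
      mul (p ⊗ₜ (p' ⊗ₜ b)) (q ⊗ₜ (q' ⊗ₜ c)) = M2 K A H ρ p q p' q' c (D2 K H b))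
    (hρ : ∀ (b c : H) (a : A), ρ (b * c) a = ρ b (ρ c a))
    (halg : ∀ (b : H) (x y : A), ρ b (x * y) =
      LinearMap.mul' K A ((TensorProduct.homTensorHomMap (RingHom.id K) A A A A)
        ((TensorProduct.map ρ ρ) (Coalgebra.comul (R := K) b)) (x ⊗ₜ[K] y)))
    (a₁ a₂ a₃ a₁' a₂' a₃' : A) (b₁ b₃ : H) :
    mul (a₁ ⊗ₜ (a₁' ⊗ₜ b₁)) ∘ₗ M2 K A H ρ a₂ a₃ a₂' a₃' b₃
      = PsiM K A H ρ a₁ a₂ a₃ a₁' a₂' a₃' b₃ ∘ₗ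
        TensorProduct.mk K (H ⊗[K] ((H ⊗[K] (H ⊗[K] H)) ⊗[K] H)) (H ⊗[K] (H ⊗[K] H))
          (betaM K H (map (dd K H) (lTensor H (dd K H)) (D2 K H b₁))) := by
  ext u' v' w'
  simp only [TensorProduct.AlgebraTensorModule.curry_apply, TensorProduct.curry_apply,
    LinearMap.coe_restrictScalars, LinearMap.comp_apply, TensorProduct.mk_apply, M2, Fm, Gm,
    map_tmul, LinearEquiv.coe_coe, TensorProduct.comm_tmul, LinearMap.mulLeft_apply,
    LinearMap.mulRight_apply]
  rw [hm]
  have h := LinearMap.congr_fun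
    (hR' K A H ρ hρ halg a₁ a₂ a₃ a₁' a₂' a₃' b₃ u' v' w') (D2 K H b₁)
  simp only [LinearMap.comp_apply, LinearMap.flip_apply, TensorProduct.mk_apply] at h
  exact h

end CPassocAux

/-- The crossed product multiplication on `X = A ⊗ A ⊗ H`, defined by
`(a₁ ⊗ a₁′ ⊗ b¹)(a₂ ⊗ a₂′ ⊗ b²) = Σ a₁(b¹₍₁₎a₂) ⊗ (b¹₍₃₎a₂′)a₁′ ⊗ b¹₍₂₎b²`, is associative. -/
theorem crossed_product_mul_assoc
    {K A H : Type u} [Field K] [Ring A] [Algebra K A] [Ring H] [Bialgebra K H]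
    (M : ModAlg K A H)
    (mul : (A ⊗[K] (A ⊗[K] H)) →ₗ[K] (A ⊗[K] (A ⊗[K] H)) →ₗ[K] (A ⊗[K] (A ⊗[K] H)))
    (hmul : XMulFormula K A H M.act mul) :
    ∀ x y z : A ⊗[K] (A ⊗[K] H), mul (mul x y) z = mul x (mul y z) := by
  classical
  have hm : ∀ (p p' : A) (b : H) (q q' : A) (c : H),
      mul (p ⊗ₜ (p' ⊗ₜ b)) (q ⊗ₜ (q' ⊗ₜ c)) =
        CPassocAux.M2 K A H M.act p q p' q' c (CPassocAux.D2 K H b) :=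
    fun p p' b q q' c => hmul p p' b q q' c
  have key : ∀ (a₁ a₁' : A) (b₁ : H) (a₂ a₂' : A) (b₂ : H) (a₃ a₃' : A) (b₃ : H),
      mul (mul (a₁ ⊗ₜ (a₁' ⊗ₜ b₁)) (a₂ ⊗ₜ (a₂' ⊗ₜ b₂))) (a₃ ⊗ₜ (a₃' ⊗ₜ b₃)) =
      mul (a₁ ⊗ₜ (a₁' ⊗ₜ b₁)) (mul (a₂ ⊗ₜ (a₂' ⊗ₜ b₂)) (a₃ ⊗ₜ (a₃' ⊗ₜ b₃))) := by
    intro a₁ a₁' b₁ a₂ a₂' b₂ a₃ a₃' b₃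
    rw [hm a₁ a₁' b₁ a₂ a₂' b₂, hm a₂ a₂' b₂ a₃ a₃' b₃]
    have hL := LinearMap.congr_fun
      (CPassocAux.hLm K A H M.act mul hm a₁ a₂ a₃ a₁' a₂' a₃' b₂ b₃) (CPassocAux.D2 K H b₁)
    have hR := LinearMap.congr_fun
      (CPassocAux.hRm K A H M.act mul hm M.act_mul M.act_alg a₁ a₂ a₃ a₁' a₂' a₃' b₁ b₃)
      (CPassocAux.D2 K H b₂)
    simp only [LinearMap.comp_apply, LinearMap.flip_apply, TensorProduct.mk_apply] at hL hR
    rw [hL, hR]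
    have hc := LinearMap.congr_fun (CPassocAux.hC K H) b₁
    simp only [LinearMap.comp_apply] at hc
    rw [hc]
  intro x y z
  induction x using TensorProduct.induction_on with
  | zero => simp
  | add x₁ x₂ h₁ h₂ => simp only [map_add, LinearMap.add_apply, h₁, h₂]
  | tmul a₁ t₁ =>
    induction t₁ using TensorProduct.induction_on with
    | zero => simp
    | add s₁ s₂ h₁ h₂ =>
      simp only [TensorProduct.tmul_add, map_add, LinearMap.add_apply, h₁, h₂]
    | tmul a₁' b₁ =>
      induction y using TensorProduct.induction_on with
      | zero => simp
      | add y₁ y₂ h₁ h₂ => simp only [map_add, LinearMap.add_apply, h₁, h₂]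
      | tmul a₂ t₂ =>
        induction t₂ using TensorProduct.induction_on with
        | zero => simp
        | add s₁ s₂ h₁ h₂ =>
          simp only [TensorProduct.tmul_add, map_add, LinearMap.add_apply, h₁, h₂]
        | tmul a₂' b₂ =>
          induction z using TensorProduct.induction_on with
          | zero => simp
          | add z₁ z₂ h₁ h₂ => simp only [map_add, LinearMap.add_apply, h₁, h₂]
          | tmul a₃ t₃ =>
            induction t₃ using TensorProduct.induction_on with
            | zero => simp
            | add s₁ s₂ h₁ h₂ =>
              simp only [TensorProduct.tmul_add, map_add, LinearMap.add_apply, h₁, h₂]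
            | tmul a₃' b₃ => exact key a₁ a₁' b₁ a₂ a₂' b₂ a₃ a₃' b₃
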